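/- If E ⊆ ℝ^d is weakly porous, then E has Lebesgue measure zero. -/

import Mathlib

open MeasureTheory Metric Filter
open scoped ENNReal Topology

/-- A half-open axis-parallel cube in `ℝ^d`: `[a₁, a₁+l) × ⋯ × [a_d, a_d+l)`. -/
structure Cube (d : ℕ) where
  a : Fin d → ℝ
  l : ℝ
  l_pos : 0 < l

/-- The underlying point set of a cube. -/
def Cube.set {d : ℕ} (Q : Cube d) : Set (EuclideanSpace ℝ (Fin d)) :=
  {x | ∀ i, Q.a i ≤ x i ∧ x i < Q.a i + Q.l}

/-- `Q` is a dyadic subcube of `R`: a member of `𝒟_j(R)` for some `j ≥ 0`. -/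
def IsDyadicSubcube {d : ℕ} (R Q : Cube d) : Prop :=
  ∃ j : ℕ, ∃ k : Fin d → ℕ, (∀ i, k i < 2 ^ j) ∧ Q.l = R.l / 2 ^ j ∧
    ∀ i, Q.a i = R.a i + (k i : ℝ) * (R.l / 2 ^ j)

/-- `Q' ∈ ℱ(R,E)`: a maximal dyadic subcube of `R` avoiding `E`, i.e.
`Q' ∩ E = ∅` and its dyadic parent `πQ'` meets `E`. -/
def IsMaxEmpty {d : ℕ} (R : Cube d) (E : Set (EuclideanSpace ℝ (Fin d))) (Q' : Cube d) : Prop :=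
  IsDyadicSubcube R Q' ∧ Q'.set ∩ E = ∅ ∧
    ∃ P : Cube d, IsDyadicSubcube R P ∧ P.l = 2 * Q'.l ∧ Q'.set ⊆ P.set ∧ (P.set ∩ E).Nonempty

/-- `M = M(R)`: a largest dyadic subcube of `R` containing no point of `E`. -/
def IsLargestEmptyDyadic {d : ℕ} (R : Cube d) (E : Set (EuclideanSpace ℝ (Fin d)))
    (M : Cube d) : Prop :=
  IsDyadicSubcube R M ∧ M.set ∩ E = ∅ ∧
    ∀ Q : Cube d, IsDyadicSubcube R Q → Q.set ∩ E = ∅ → Q.l ≤ M.l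

/-- Weak porosity of `E ⊆ ℝ^d`. -/
def WeaklyPorous {d : ℕ} (E : Set (EuclideanSpace ℝ (Fin d))) : Prop :=
  ∃ c δ : ℝ, 0 < c ∧ c < 1 ∧ 0 < δ ∧ δ < 1 ∧
    ∀ R : Cube d, ∃ M : Cube d, IsLargestEmptyDyadic R E M ∧
      ∃ F : Finset (Cube d),
        (↑F : Set (Cube d)).Pairwise (fun Q Q' => Disjoint Q.set Q'.set) ∧
        (∀ Q ∈ F, IsDyadicSubcube R Q ∧ Q.set ∩ E = ∅ ∧
          ENNReal.ofReal δ * volume M.set ≤ volume Q.set) ∧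
        ENNReal.ofReal c * volume R.set ≤ ∑ Q ∈ F, volume Q.set

/-- A cube is the preimage of a box under the measurable equivalence with the pi type. -/
lemma cube_eq_pi {d : ℕ} (Q : Cube d) :
    Q.set = (MeasurableEquiv.toLp 2 (Fin d → ℝ)).symm ⁻¹'
      (Set.univ.pi fun i => Set.Ico (Q.a i) (Q.a i + Q.l)) := by
  ext x; simp [Cube.set, Set.mem_pi]

lemma cube_meas {d : ℕ} (Q : Cube d) : MeasurableSet Q.set := by
  rw [cube_eq_pi]
  exact (MeasurableSet.univ_pi fun i => measurableSet_Ico).preimage (by measurability)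

lemma cube_vol {d : ℕ} (Q : Cube d) : volume Q.set = ENNReal.ofReal (Q.l ^ d) := by
  rw [cube_eq_pi, (EuclideanSpace.volume_preserving_symm_measurableEquiv_toLp (Fin d)).measure_preimage
    ((MeasurableSet.univ_pi fun i => measurableSet_Ico).nullMeasurableSet)]
  rw [volume_pi_pi]
  simp [Real.volume_Ico, ENNReal.ofReal_pow Q.l_pos.le]

lemma dyadic_subset {d : ℕ} {R Q : Cube d} (h : IsDyadicSubcube R Q) : Q.set ⊆ R.set := by
  obtain ⟨j, k, hk, hl, ha⟩ := h
  intro x hx i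
  have hi := hx i
  have h1 : (0:ℝ) < R.l / 2 ^ j := div_pos R.l_pos (by positivity)
  have hk' : ((k i : ℝ) + 1) ≤ 2 ^ j := by exact_mod_cast Nat.succ_le_of_lt (hk i)
  constructor
  · have : R.a i ≤ Q.a i := by
      rw [ha i]; have : (0:ℝ) ≤ (k i : ℝ) := Nat.cast_nonneg _; nlinarith
    linarith [hi.1]
  · have : Q.a i + Q.l ≤ R.a i + R.l := by
      rw [ha i, hl]
      have : ((k i : ℝ) + 1) * (R.l / 2 ^ j) ≤ 2 ^ j * (R.l / 2 ^ j) :=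
        mul_le_mul_of_nonneg_right hk' h1.le
      rw [mul_div_cancel₀] at this
      · linarith
      · positivity
    linarith [hi.2]

/-- Key estimate: in every closed ball there is a definite "hole" avoiding `E`. -/
lemma key_hole {d : ℕ} {E : Set (EuclideanSpace ℝ (Fin d))} {c : ℝ}
    (hd : 0 < d) (hc : 0 < c)
    (hP : ∀ R : Cube d, ∃ F : Finset (Cube d),
      (↑F : Set (Cube d)).Pairwise (fun Q Q' => Disjoint Q.set Q'.set) ∧
      (∀ Q ∈ F, IsDyadicSubcube R Q ∧ Q.set ∩ E = ∅) ∧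
      ENNReal.ofReal c * volume R.set ≤ ∑ Q ∈ F, volume Q.set)
    (x : EuclideanSpace ℝ (Fin d)) {r : ℝ} (hr : 0 < r) :
    volume (E ∩ closedBall x r) + ENNReal.ofReal (c * (2 * r / Real.sqrt d) ^ d)
      ≤ volume (closedBall x r) := by
  have hsd : (0:ℝ) < Real.sqrt d := Real.sqrt_pos.2 (by exact_mod_cast hd)
  set s : ℝ := 2 * r / Real.sqrt d with hs_def
  have hs : 0 < s := by positivity
  set R : Cube d := ⟨fun i => x i - s / 2, s, hs⟩ with hR
  have hRsub : R.set ⊆ closedBall x r := by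
    intro y hy
    rw [mem_closedBall, EuclideanSpace.dist_eq]
    have hbd : ∀ i, dist (y i) (x i) ^ 2 ≤ (s/2)^2 := by
      intro i
      have h1 := (hy i).1
      have h2 := (hy i).2
      rw [Real.dist_eq]
      have : |y i - x i| ≤ s/2 := by
        rw [abs_le]; constructor <;> simp only [hR] at h1 h2 <;> [linarith; linarith]
      nlinarith [abs_nonneg (y i - x i)]
    have hsum : ∑ i, dist (y i) (x i) ^ 2 ≤ d * (s/2)^2 := by
      calc ∑ i, dist (y i) (x i) ^ 2 ≤ ∑ _i : Fin d, (s/2)^2 :=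
            Finset.sum_le_sum fun i _ => hbd i
        _ = d * (s/2)^2 := by simp [mul_comm]
    calc Real.sqrt (∑ i, dist (y i) (x i) ^ 2) ≤ Real.sqrt (d * (s/2)^2) :=
          Real.sqrt_le_sqrt hsum
      _ = Real.sqrt d * (s/2) := by
          rw [Real.sqrt_mul (by positivity), Real.sqrt_sq (by positivity)]
      _ = r := by rw [hs_def]; field_simp
  obtain ⟨F, hdisj, hmem, hsum⟩ := hP R
  set U : Set (EuclideanSpace ℝ (Fin d)) := ⋃ Q ∈ F, Q.set with hU
  have hUmeas : MeasurableSet U :=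
    Finset.measurableSet_biUnion F fun Q _ => cube_meas Q
  have hUvol : volume U = ∑ Q ∈ F, volume Q.set :=
    measure_biUnion_finset hdisj fun Q _ => cube_meas Q
  have hUsub : U ⊆ closedBall x r := by
    refine Set.iUnion₂_subset fun Q hQ => ?_
    exact (dyadic_subset (hmem Q hQ).1).trans hRsub
  have hUE : E ∩ closedBall x r ⊆ closedBall x r \ U := by
    intro y hy
    refine ⟨hy.2, fun hyU => ?_⟩
    obtain ⟨Q, hQF, hyQ⟩ := Set.mem_iUnion₂.1 hyU
    have h0 : y ∈ Q.set ∩ E := ⟨hyQ, hy.1⟩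
    rw [(hmem Q hQF).2] at h0
    exact h0
  have hcs : ENNReal.ofReal (c * s ^ d) ≤ volume U := by
    rw [hUvol.symm] at hsum
    calc ENNReal.ofReal (c * s ^ d) = ENNReal.ofReal c * ENNReal.ofReal (s ^ d) := by
          rw [ENNReal.ofReal_mul hc.le]
      _ = ENNReal.ofReal c * volume R.set := by rw [cube_vol]
      _ ≤ volume U := hsum
  calc volume (E ∩ closedBall x r) + ENNReal.ofReal (c * s ^ d)
      ≤ volume (closedBall x r \ U) + volume U :=
        add_le_add (measure_mono hUE) hcs
    _ = volume (closedBall x r) := by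
        have h2 := measure_diff_add_inter (μ := volume) (closedBall x r) hUmeas
        rwa [Set.inter_eq_self_of_subset_right hUsub] at h2

/-- From the hole estimate, a weakly porous set is null (case `d > 0`). -/
lemma null_of_hole {d : ℕ} (E : Set (EuclideanSpace ℝ (Fin d))) {c : ℝ}
    (hd : 0 < d) (hc0 : 0 < c)
    (hkey : ∀ (x : EuclideanSpace ℝ (Fin d)) {r : ℝ}, 0 < r →
      volume (E ∩ closedBall x r) + ENNReal.ofReal (c * (2 * r / Real.sqrt d) ^ d)
        ≤ volume (closedBall x r)) :
    volume E = 0 := by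
  have hsd : (0:ℝ) < Real.sqrt d := Real.sqrt_pos.2 (by exact_mod_cast hd)
  set B : ℝ≥0∞ := volume (ball (0 : EuclideanSpace ℝ (Fin d)) 1) with hB
  have hB0 : B ≠ 0 := (measure_ball_pos _ _ one_pos).ne'
  have hBt : B ≠ ∞ := measure_ball_lt_top.ne
  set γ : ℝ≥0∞ := min (ENNReal.ofReal (c * (2 / Real.sqrt d) ^ d)) B with hγ
  have hγ0 : γ ≠ 0 :=
    (lt_min (ENNReal.ofReal_pos.2 (by positivity)) (pos_iff_ne_zero.2 hB0)).ne'
  have hγB : γ ≤ B := min_le_right _ _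
  set a : ℝ≥0∞ := (B - γ) / B with ha_def
  have ha1 : a < 1 := by
    rw [ha_def, ENNReal.div_lt_iff (Or.inl hB0) (Or.inl hBt), one_mul]
    exact ENNReal.sub_lt_self hBt hB0 hγ0
  have hcb : ∀ (x : EuclideanSpace ℝ (Fin d)) (r : ℝ), 0 < r →
      volume (closedBall x r) = ENNReal.ofReal (r ^ d) * B := by
    intro x r hr
    rw [Measure.addHaar_closedBall volume x hr.le, finrank_euclideanSpace_fin]
  have hratio : ∀ (x : EuclideanSpace ℝ (Fin d)) (r : ℝ), 0 < r →
      volume (E ∩ closedBall x r) / volume (closedBall x r) ≤ a := by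
    intro x r hr
    set v : ℝ≥0∞ := ENNReal.ofReal (r ^ d) with hv
    have hv0 : v ≠ 0 := (ENNReal.ofReal_pos.2 (by positivity)).ne'
    have hvt : v ≠ ∞ := ENNReal.ofReal_ne_top
    have hkx := hkey x hr
    have heq : ENNReal.ofReal (c * (2 * r / Real.sqrt d) ^ d)
        = ENNReal.ofReal (c * (2 / Real.sqrt d) ^ d) * v := by
      rw [hv, ← ENNReal.ofReal_mul (by positivity)]
      congr 1
      rw [mul_assoc, ← mul_pow]
      congr 2
      field_simp
    rw [heq] at hkx
    have hkx2 : volume (E ∩ closedBall x r) + γ * v ≤ v * B := by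
      calc volume (E ∩ closedBall x r) + γ * v
          ≤ volume (E ∩ closedBall x r)
              + ENNReal.ofReal (c * (2 / Real.sqrt d) ^ d) * v :=
            add_le_add_right (mul_le_mul_left (min_le_left _ _) v) _
        _ ≤ volume (closedBall x r) := hkx
        _ = v * B := hcb x r hr
    have hfin : γ * v ≠ ∞ := ENNReal.mul_ne_top (ne_top_of_le_ne_top hBt hγB) hvt
    have hmain : volume (E ∩ closedBall x r) ≤ v * (B - γ) := by
      rw [← ENNReal.add_le_add_iff_right hfin]
      calc volume (E ∩ closedBall x r) + γ * v ≤ v * B := hkx2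
        _ = v * (B - γ) + γ * v := by
            rw [mul_comm γ v, ← mul_add, tsub_add_cancel_of_le hγB]
    calc volume (E ∩ closedBall x r) / volume (closedBall x r)
        ≤ (v * (B - γ)) / (v * B) := by
          rw [hcb x r hr]; exact ENNReal.div_le_div_right hmain _
      _ = (B - γ) / B := ENNReal.mul_div_mul_left _ _ hv0 hvt
  have hae : ∀ᵐ x ∂(volume.restrict E), False := by
    filter_upwards [Besicovitch.ae_tendsto_measure_inter_div volume E] with x hx
    have h1 : ∀ᶠ r in 𝓝[>] (0:ℝ),
        a < volume (E ∩ closedBall x r) / volume (closedBall x r) :=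
      hx.eventually (eventually_gt_nhds ha1)
    have h2 : ∀ᶠ r in 𝓝[>] (0:ℝ),
        volume (E ∩ closedBall x r) / volume (closedBall x r) ≤ a := by
      filter_upwards [self_mem_nhdsWithin] with r hr
      exact hratio x r hr
    obtain ⟨r, hr1, hr2⟩ := (h1.and h2).exists
    exact absurd (hr1.trans_le hr2) (lt_irrefl a)
  have hr0 : volume.restrict E = 0 := by
    rw [← Measure.measure_univ_eq_zero]
    simpa [ae_iff] using hae
  calc volume E = volume.restrict E Set.univ := (Measure.restrict_apply_univ E).symm
    _ = 0 := by rw [hr0]; simp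

/-- a weakly porous set has Lebesgue measure zero. -/
theorem stmt11 {d : ℕ} (E : Set (EuclideanSpace ℝ (Fin d))) (h : WeaklyPorous E) :
    volume E = 0 := by
  obtain ⟨c, δ, hc0, hc1, hδ0, hδ1, hP⟩ := h
  rcases Nat.eq_zero_or_pos d with hd | hd
  · subst hd
    set R : Cube 0 := ⟨fun _ => 0, 1, one_pos⟩ with hRdef
    obtain ⟨M, _, F, _, hmem, hsum⟩ := hP R
    have hpos : (0:ℝ≥0∞) < ENNReal.ofReal c * volume R.set := by
      rw [cube_vol]
      simp only [pow_zero, ENNReal.ofReal_one, mul_one]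
      exact ENNReal.ofReal_pos.2 hc0
    have hFne : F.Nonempty := by
      rw [Finset.nonempty_iff_ne_empty]
      rintro rfl
      rw [Finset.sum_empty] at hsum
      exact hpos.not_ge hsum
    obtain ⟨Q, hQ⟩ := hFne
    have hQuniv : Q.set = Set.univ := by
      ext x
      simp only [Cube.set, Set.mem_setOf_eq, Set.mem_univ, iff_true]
      exact fun i => i.elim0
    have hE : E = ∅ := by
      have h0 := (hmem Q hQ).2.1
      rwa [hQuniv, Set.univ_inter] at h0
    simp [hE]
  · have hP' : ∀ R : Cube d, ∃ F : Finset (Cube d),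
        (↑F : Set (Cube d)).Pairwise (fun Q Q' => Disjoint Q.set Q'.set) ∧
        (∀ Q ∈ F, IsDyadicSubcube R Q ∧ Q.set ∩ E = ∅) ∧
        ENNReal.ofReal c * volume R.set ≤ ∑ Q ∈ F, volume Q.set := by
      intro R
      obtain ⟨M, _, F, h1, h2, h3⟩ := hP R
      exact ⟨F, h1, fun Q hQ => ⟨(h2 Q hQ).1, (h2 Q hQ).2.1⟩, h3⟩
    exact null_of_hole E hd hc0 (fun x r hr => key_hole hd hc0 hP' x hr)
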